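/- Let T be a finite nonempty set of homogeneous terms and D a finite set of atomic formulas of the form d|t with d ≥ 1 and t homogeneous. Let ℓ > max({||t||^+ : t ∈ T} ∪ {||t||^− : t ∈ T}) and ℓ' > max{d : d|t ∈ D}. Let ψ be any Boolean combination of atomic formulas of the forms t ⋈ c and d | t + c', where t ∈ T, d|t ∈ D, −ℓ < c < ℓ, c' ∈ ℤ, and ⋈ ∈ {=,≠,<,≤,>,≥}. Then the minimal DFA representing ⟦ψ⟧ has at most (2 + 2ℓ)^{|T|} · (ℓ')^{|D|} states. -/

import Mathlib

namespace Presburger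

/-- A letter of the alphabet `Σ^r`, where `Σ = {0, …, ρ-1}`. -/
abbrev Letter (ρ r : ℕ) := Fin r → Fin ρ

/-- The natural number encoded by a word over `Σ` (most significant digit first). -/
def natVal (ρ : ℕ) (w : List ℕ) : ℕ := w.foldl (fun acc b => ρ * acc + b) 0

/-- The integer encoded by a nonempty word over `Σ` (ρ's complement,
most significant digit first); the empty word gets the junk value `0`. -/
def intVal (ρ : ℕ) : List ℕ → ℤ
  | [] => 0
  | b :: u => (natVal ρ u : ℤ) - (if b = 0 then 0 else (ρ : ℤ) ^ u.length)

/-- The tuple of natural numbers encoded track-wise by a word over `Σ^r` (as integers). -/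
def natVec (ρ r : ℕ) (w : List (Letter ρ r)) : Fin r → ℤ :=
  fun i => (natVal ρ (w.map fun b => (b i : ℕ)) : ℤ)

/-- The tuple of integers encoded track-wise by a nonempty word over `Σ^r`. -/
def intVec (ρ r : ℕ) (w : List (Letter ρ r)) : Fin r → ℤ :=
  fun i => intVal ρ (w.map fun b => (b i : ℕ))

/-- A language over `Σ^r` represents a set `U ⊆ ℤ^r` if it consists exactly of the
nonempty words encoding a member of `U`. -/
def Represents (ρ r : ℕ) (L : Language (Letter ρ r)) (U : Set (Fin r → ℤ)) : Prop :=
  ∀ w : List (Letter ρ r), w ∈ L ↔ (w ≠ [] ∧ intVec ρ r w ∈ U)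

/-- A DFA represents `U ⊆ ℤ^r` if its accepted language does. -/
def DFARepresents (ρ r : ℕ) {σ : Type*} (M : DFA (Letter ρ r) σ) (U : Set (Fin r → ℤ)) : Prop :=
  Represents ρ r M.accepts U

/-- Value of the homogeneous term with coefficients `k` at the point `a`. -/
def tval {r : ℕ} (k : Fin r → ℤ) (a : Fin r → ℤ) : ℤ := ∑ i, k i * a i

/-- A homogeneous term is `0` or has all its coefficients nonzero. -/
def Homog {r : ℕ} (k : Fin r → ℤ) : Prop := k = 0 ∨ ∀ i, k i ≠ 0

/-- `σ(b)`: componentwise `0` if the digit is `0` and `-1` otherwise. -/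
def sgnLetter {ρ r : ℕ} (b : Letter ρ r) : Fin r → ℤ :=
  fun i => if (b i : ℕ) = 0 then 0 else -1

/-- The letter `b` viewed as a tuple of integers. -/
def letterInt {ρ r : ℕ} (b : Letter ρ r) : Fin r → ℤ := fun i => ((b i : ℕ) : ℤ)

/-- `‖t‖⁺`: the sum of the positive coefficients of `t`. -/
def posNorm {r : ℕ} (k : Fin r → ℤ) : ℤ := ∑ i, max (k i) 0

/-- `‖t‖⁻`: the sum of the absolute values of the negative coefficients of `t`. -/
def negNorm {r : ℕ} (k : Fin r → ℤ) : ℤ := ∑ i, max (-k i) 0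

/-- `gcd(t)`: the gcd of the absolute values of the coefficients of `t`. -/
def gcdT {r : ℕ} (k : Fin r → ℤ) : ℕ := Finset.univ.gcd fun i => (k i).natAbs

/-- The transition function `η` of the infinite-state automaton for `t`,
restricted to the integer states: `η(q, b) = ρ·q + t[b]`. -/
def etaStep (ρ : ℕ) {r : ℕ} (k : Fin r → ℤ) (q : ℤ) (b : Letter ρ r) : ℤ :=
  ρ * q + tval k (letterInt b)

/-- The transition of `η` out of the initial state: `η(q_I, b) = t[σ(b)]`. -/
def etaInit (ρ : ℕ) {r : ℕ} (k : Fin r → ℤ) (b : Letter ρ r) : ℤ :=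
  tval k (sgnLetter b)

/-- A state `q` is small (for `t ⋈ c`) if `q < min{c, -‖t‖⁺}`. -/
def IsSmall {r : ℕ} (k : Fin r → ℤ) (c q : ℤ) : Prop := q < min c (-posNorm k)

/-- A state `q` is large (for `t ⋈ c`) if `q > max{c, ‖t‖⁻}`. -/
def IsLarge {r : ℕ} (k : Fin r → ℤ) (c q : ℤ) : Prop := max c (negNorm k) < q

/-- The six relations `=, ≠, <, ≤, >, ≥` on `ℤ`. -/
def rel6 : Set (ℤ → ℤ → Prop) :=
  {fun x y => x = y, fun x y => x ≠ y, fun x y => x < y,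
   fun x y => x ≤ y, fun x y => x > y, fun x y => x ≥ y}

/-- Clamp an integer into the state set `{m, …, n}`; yields `none` (the initial state)
only in the degenerate case `m > n`, which never occurs for small `m` and large `n`. -/
noncomputable def clampSt (m n x : ℤ) : Option ↥(Finset.Icc m n) :=
  if h : max m (min n x) ∈ Finset.Icc m n then some ⟨max m (min n x), h⟩ else none

/-- The DFA `A^{t ⋈ c}_{(m,n)}` for the (in)equation `t ⋈ c`: states are
`q_I = none` together with `{m, …, n}`, transitions clamp `η` to `[m, n]`, and the
accepting states are the integer states `q` with `q ⋈ c`. -/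
noncomputable def ineqDFA (ρ : ℕ) {r : ℕ} (k : Fin r → ℤ) (m n : ℤ) (rel : ℤ → ℤ → Prop) (c : ℤ) :
    DFA (Letter ρ r) (Option ↥(Finset.Icc m n)) where
  step q b :=
    match q with
    | none => clampSt m n (etaInit ρ k b)
    | some z => clampSt m n (etaStep ρ k z.val b)
  start := none
  accept := {q | ∃ z : ↥(Finset.Icc m n), q = some z ∧ rel z.val c}

/-- Two states of a DFA are equivalent if they accept exactly the same words. -/
def stEquiv {α : Type*} {σ : Type*} (M : DFA α σ) (p q : σ) : Prop :=
  ∀ w : List α, (M.evalFrom p w ∈ M.accept ↔ M.evalFrom q w ∈ M.accept)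

end Presburger

namespace Presburger

/-- The six relation symbols `=, ≠, <, ≤, >, ≥`. -/
inductive Rel6 : Type
  | eq | ne | lt | le | gt | ge
deriving DecidableEq

/-- Interpretation of a relation symbol. -/
def Rel6.interp : Rel6 → ℤ → ℤ → Prop
  | .eq, x, y => x = y
  | .ne, x, y => x ≠ y
  | .lt, x, y => x < y
  | .le, x, y => x ≤ y
  | .gt, x, y => x > y
  | .ge, x, y => x ≥ y

/-- Boolean combinations of atomic formulas `t ⋈ c` and `d ∣ t + c'` over
homogeneous terms in `r` variables (given by their coefficient tuples). -/
inductive BC (r : ℕ) : Type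
  | rel : (Fin r → ℤ) → Rel6 → ℤ → BC r
  | dvd : ℤ → (Fin r → ℤ) → ℤ → BC r
  | not : BC r → BC r
  | and : BC r → BC r → BC r
  | or : BC r → BC r → BC r

/-- Satisfaction of a Boolean combination at a point `a ∈ ℤ^r`. -/
def BC.sat {r : ℕ} : BC r → (Fin r → ℤ) → Prop
  | .rel k R c, a => R.interp (tval k a) c
  | .dvd d k c, a => d ∣ tval k a + c
  | .not φ, a => ¬ φ.sat a
  | .and φ ψ, a => φ.sat a ∧ ψ.sat a
  | .or φ ψ, a => φ.sat a ∨ ψ.sat a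

/-- All atoms `t ⋈ c` use a term `t ∈ T` with `-ℓ < c < ℓ`, and all atoms
`d ∣ t + c'` use a pair `(d, t) ∈ D`. -/
def BC.valid {r : ℕ} (T : Finset (Fin r → ℤ)) (D : Finset (ℤ × (Fin r → ℤ)))
    (ℓ : ℤ) : BC r → Prop
  | .rel k _ c => k ∈ T ∧ -ℓ < c ∧ c < ℓ
  | .dvd d k _ => (d, k) ∈ D
  | .not φ => φ.valid T D ℓ
  | .and φ ψ => φ.valid T D ℓ ∧ ψ.valid T D ℓ
  | .or φ ψ => φ.valid T D ℓ ∧ ψ.valid T D ℓ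

/-! ### Auxiliary development for `stmt_10` -/

/-- Clamp an integer value into `[-ℓ, ℓ]`. -/
def clampv (ℓ x : ℤ) : ℤ := max (-ℓ) (min ℓ x)

lemma clampSt_congr {m n x y : ℤ} (h : max m (min n x) = max m (min n y)) :
    clampSt m n x = clampSt m n y := by
  unfold clampSt; rw [h]

lemma clampSt_eq {m n : ℤ} (h : m ≤ n) (x : ℤ) :
    clampSt m n x = some ⟨max m (min n x), by
      simp only [Finset.mem_Icc]
      exact ⟨le_max_left _ _, max_le h (min_le_left _ _)⟩⟩ := by
  have hm : max m (min n x) ∈ Finset.Icc m n := by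
    simp only [Finset.mem_Icc]
    exact ⟨le_max_left _ _, max_le h (min_le_left _ _)⟩
  simp [clampSt, hm]

/-- Clamp a residue into `[0, d)`. -/
noncomputable def modClamp (d x : ℤ) : Option ↥(Finset.Ico (0 : ℤ) d) :=
  if h : x % d ∈ Finset.Ico (0 : ℤ) d then some ⟨x % d, h⟩ else none

lemma modClamp_congr {d x y : ℤ} (h : x % d = y % d) : modClamp d x = modClamp d y := by
  unfold modClamp; rw [h]

lemma modClamp_eq {d : ℤ} (hd : 1 ≤ d) (x : ℤ) :
    modClamp d x = some ⟨x % d, by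
      simp only [Finset.mem_Ico]
      exact ⟨Int.emod_nonneg _ (by omega), Int.emod_lt_of_pos _ (by omega)⟩⟩ := by
  have hm : x % d ∈ Finset.Ico (0 : ℤ) d := by
    simp only [Finset.mem_Ico]
    exact ⟨Int.emod_nonneg _ (by omega), Int.emod_lt_of_pos _ (by omega)⟩
  simp [modClamp, hm]

lemma posNorm_nonneg {r : ℕ} (k : Fin r → ℤ) : 0 ≤ posNorm k :=
  Finset.sum_nonneg fun i _ => le_max_right _ _

lemma negNorm_nonneg {r : ℕ} (k : Fin r → ℤ) : 0 ≤ negNorm k :=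
  Finset.sum_nonneg fun i _ => le_max_right _ _

lemma tval_letterInt_le {ρ r : ℕ} (k : Fin r → ℤ) (b : Letter ρ r) :
    tval k (letterInt b) ≤ ((ρ : ℤ) - 1) * posNorm k := by
  unfold tval posNorm letterInt
  rw [Finset.mul_sum]
  refine Finset.sum_le_sum fun i _ => ?_
  have h1 : (0 : ℤ) ≤ ((b i : ℕ) : ℤ) := Int.natCast_nonneg _
  have h2 : ((b i : ℕ) : ℤ) < (ρ : ℤ) := by exact_mod_cast (b i).isLt
  rcases le_total (k i) 0 with h | h
  · rw [max_eq_right h]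
    have := mul_nonpos_of_nonpos_of_nonneg h h1
    simpa using this
  · rw [max_eq_left h]
    nlinarith

lemma tval_letterInt_ge {ρ r : ℕ} (k : Fin r → ℤ) (b : Letter ρ r) :
    -(((ρ : ℤ) - 1) * negNorm k) ≤ tval k (letterInt b) := by
  unfold tval negNorm letterInt
  rw [Finset.mul_sum, ← Finset.sum_neg_distrib]
  refine Finset.sum_le_sum fun i _ => ?_
  have h1 : (0 : ℤ) ≤ ((b i : ℕ) : ℤ) := Int.natCast_nonneg _
  have h2 : ((b i : ℕ) : ℤ) < (ρ : ℤ) := by exact_mod_cast (b i).isLt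
  rcases le_total (k i) 0 with h | h
  · rw [max_eq_left (by omega)]
    nlinarith
  · rw [max_eq_right (by omega)]
    simp only [neg_mul, neg_zero, mul_zero]
    positivity

lemma tval_sgnLetter_le {ρ r : ℕ} (k : Fin r → ℤ) (b : Letter ρ r) :
    tval k (sgnLetter b) ≤ negNorm k := by
  unfold tval negNorm sgnLetter
  refine Finset.sum_le_sum fun i _ => ?_
  by_cases hbi : (b i : ℕ) = 0 <;> simp [hbi] <;> omega

lemma tval_sgnLetter_ge {ρ r : ℕ} (k : Fin r → ℤ) (b : Letter ρ r) :
    -posNorm k ≤ tval k (sgnLetter b) := by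
  unfold tval posNorm sgnLetter
  rw [← Finset.sum_neg_distrib]
  refine Finset.sum_le_sum fun i _ => ?_
  by_cases hbi : (b i : ℕ) = 0 <;> simp [hbi] <;> omega

/-- The key absorption property: clamping commutes with the transition `η`. -/
lemma clampv_etaStep {ρ r : ℕ} (hρ : 2 ≤ ρ) {k : Fin r → ℤ} {ℓ : ℤ}
    (hp : posNorm k < ℓ) (hn : negNorm k < ℓ) (v : ℤ) (b : Letter ρ r) :
    clampv ℓ (etaStep ρ k (clampv ℓ v) b) = clampv ℓ (etaStep ρ k v b) := by
  have hpn := posNorm_nonneg k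
  have hnn := negNorm_nonneg k
  have hρ' : (2 : ℤ) ≤ (ρ : ℤ) := by exact_mod_cast hρ
  have he1 := tval_letterInt_le k b
  have he2 := tval_letterInt_ge k b
  have hℓ1 : (1 : ℤ) ≤ ℓ := by omega
  set e := tval k (letterInt b) with he
  unfold etaStep clampv
  rw [← he]
  rcases le_or_gt (-ℓ) v with h1 | h1
  · rcases le_or_gt v ℓ with h2 | h2
    · rw [min_eq_right h2, max_eq_right h1]
    · have hA : ℓ ≤ (ρ : ℤ) * ℓ + e := by nlinarith
      have hB : ℓ ≤ (ρ : ℤ) * v + e := by nlinarith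
      rw [min_eq_left h2.le, max_eq_right (by omega : -ℓ ≤ ℓ),
        min_eq_left hA, min_eq_left hB]
  · have hA : (ρ : ℤ) * (-ℓ) + e ≤ -ℓ := by nlinarith
    have hB : (ρ : ℤ) * v + e ≤ -ℓ := by nlinarith
    rw [min_eq_right (by omega : v ≤ ℓ), max_eq_left h1.le,
      min_eq_right (by omega : (ρ : ℤ) * (-ℓ) + e ≤ ℓ),
      min_eq_right (by omega : (ρ : ℤ) * v + e ≤ ℓ),
      max_eq_left hA, max_eq_left hB]

lemma emod_etaStep {ρ r : ℕ} (k : Fin r → ℤ) (d v : ℤ) (b : Letter ρ r) :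
    etaStep ρ k (v % d) b % d = etaStep ρ k v b % d := by
  have h1 : v % d ≡ v [ZMOD d] := Int.emod_emod_of_dvd v dvd_rfl
  exact (h1.mul_left ρ).add_right _

lemma natVal_concat (ρ : ℕ) (u : List ℕ) (b : ℕ) :
    natVal ρ (u ++ [b]) = ρ * natVal ρ u + b := by
  simp [natVal, List.foldl_append]

lemma intVal_concat (ρ : ℕ) {u : List ℕ} (hu : u ≠ []) (b : ℕ) :
    intVal ρ (u ++ [b]) = ρ * intVal ρ u + b := by
  cases u with
  | nil => exact absurd rfl hu
  | cons x t =>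
    show intVal ρ (x :: (t ++ [b])) = _
    simp only [intVal, natVal_concat, List.length_append, List.length_cons,
      List.length_nil]
    push_cast
    split <;> ring

lemma intVec_concat (ρ r : ℕ) {u : List (Letter ρ r)} (hu : u ≠ []) (b : Letter ρ r) :
    intVec ρ r (u ++ [b]) = fun i => ρ * intVec ρ r u i + letterInt b i := by
  funext i
  unfold intVec letterInt
  rw [List.map_append]
  exact intVal_concat ρ (by simpa using hu) _

lemma intVec_single (ρ r : ℕ) (b : Letter ρ r) : intVec ρ r [b] = sgnLetter b := by
  funext i
  simp only [intVec, List.map, intVal, natVal, sgnLetter, List.foldl_nil,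
    List.length_nil, pow_zero]
  split <;> simp

lemma tval_affine {r : ℕ} (k : Fin r → ℤ) (c : ℤ) (a e : Fin r → ℤ) :
    tval k (fun i => c * a i + e i) = c * tval k a + tval k e := by
  unfold tval
  rw [Finset.mul_sum, ← Finset.sum_add_distrib]
  exact Finset.sum_congr rfl fun i _ => by ring

lemma tval_intVec_concat (ρ r : ℕ) {u : List (Letter ρ r)} (hu : u ≠ [])
    (b : Letter ρ r) (k : Fin r → ℤ) :
    tval k (intVec ρ r (u ++ [b])) = etaStep ρ k (tval k (intVec ρ r u)) b := by
  rw [intVec_concat ρ r hu b]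
  exact tval_affine k _ _ _

/-- The state space of the product automaton. -/
abbrev St (r : ℕ) (T : Finset (Fin r → ℤ)) (D : Finset (ℤ × (Fin r → ℤ))) (ℓ : ℤ) :
    Type :=
  (↥T → Option ↥(Finset.Icc (-ℓ) ℓ)) × (∀ p : ↥D, Option ↥(Finset.Ico (0 : ℤ) p.1.1))

/-- Evaluation of a Boolean combination at a state. -/
def evalBC {r : ℕ} (T : Finset (Fin r → ℤ)) (D : Finset (ℤ × (Fin r → ℤ))) (ℓ : ℤ)
    (q : St r T D ℓ) : BC r → Prop
  | .rel k R c =>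
      if h : k ∈ T then (q.1 ⟨k, h⟩).elim False fun z => R.interp z.1 c else False
  | .dvd d k c =>
      if h : (d, k) ∈ D then (q.2 ⟨(d, k), h⟩).elim False fun z => d ∣ z.1 + c
      else False
  | .not φ => ¬ evalBC T D ℓ q φ
  | .and φ χ => evalBC T D ℓ q φ ∧ evalBC T D ℓ q χ
  | .or φ χ => evalBC T D ℓ q φ ∨ evalBC T D ℓ q χ

/-- The product automaton. -/
noncomputable def mkDFA (ρ r : ℕ) (T : Finset (Fin r → ℤ)) (D : Finset (ℤ × (Fin r → ℤ))) (ℓ : ℤ)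
    (A : Set (St r T D ℓ)) : DFA (Letter ρ r) (St r T D ℓ) where
  step q b :=
    (fun k => (q.1 k).elim (clampSt (-ℓ) ℓ (etaInit ρ k.1 b))
        (fun z => clampSt (-ℓ) ℓ (etaStep ρ k.1 z.1 b)),
     fun p => (q.2 p).elim (modClamp p.1.1 (etaInit ρ p.1.2 b))
        (fun z => modClamp p.1.1 (etaStep ρ p.1.2 z.1 b)))
  start := (fun _ => none, fun _ => none)
  accept := A

lemma evalT {ρ r : ℕ} (hρ : 2 ≤ ρ) {T : Finset (Fin r → ℤ)}
    {D : Finset (ℤ × (Fin r → ℤ))} {ℓ : ℤ}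
    (hℓ : ∀ k ∈ T, posNorm k < ℓ ∧ negNorm k < ℓ) (A : Set (St r T D ℓ)) :
    ∀ w : List (Letter ρ r), w ≠ [] → ∀ (k) (hk : k ∈ T),
      ((mkDFA ρ r T D ℓ A).eval w).1 ⟨k, hk⟩ =
        clampSt (-ℓ) ℓ (tval k (intVec ρ r w)) := by
  intro w
  induction w using List.reverseRecOn with
  | nil => intro h; exact absurd rfl h
  | append_singleton u b ih =>
    intro _ k hk
    obtain ⟨hp, hn⟩ := hℓ k hk
    have hℓ1 : (1 : ℤ) ≤ ℓ := lt_of_le_of_lt (posNorm_nonneg k) hp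
    rw [DFA.eval_append_singleton]
    rcases eq_or_ne u [] with rfl | hu
    · show (((mkDFA ρ r T D ℓ A).eval ([] : List (Letter ρ r))).1 ⟨k, hk⟩).elim
        (clampSt (-ℓ) ℓ (etaInit ρ k b))
        (fun z => clampSt (-ℓ) ℓ (etaStep ρ k z.1 b)) = _
      rw [DFA.eval_nil]
      show clampSt (-ℓ) ℓ (etaInit ρ k b) = _
      rw [show intVec ρ r ([] ++ [b]) = sgnLetter b from intVec_single ρ r b]
      rfl
    · have h1 := ih hu k hk
      show (((mkDFA ρ r T D ℓ A).eval u).1 ⟨k, hk⟩).elim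
        (clampSt (-ℓ) ℓ (etaInit ρ k b))
        (fun z => clampSt (-ℓ) ℓ (etaStep ρ k z.1 b)) = _
      rw [h1, clampSt_eq (by omega : -ℓ ≤ ℓ)]
      show clampSt (-ℓ) ℓ (etaStep ρ k (max (-ℓ) (min ℓ (tval k (intVec ρ r u)))) b) = _
      rw [tval_intVec_concat ρ r hu b k]
      exact clampSt_congr (clampv_etaStep hρ hp hn _ b)

lemma evalD {ρ r : ℕ} {T : Finset (Fin r → ℤ)} {D : Finset (ℤ × (Fin r → ℤ))} {ℓ : ℤ}
    (hD : ∀ p ∈ D, 1 ≤ p.1) (A : Set (St r T D ℓ)) :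
    ∀ w : List (Letter ρ r), w ≠ [] → ∀ (p) (hp : p ∈ D),
      ((mkDFA ρ r T D ℓ A).eval w).2 ⟨p, hp⟩ =
        modClamp p.1 (tval p.2 (intVec ρ r w)) := by
  intro w
  induction w using List.reverseRecOn with
  | nil => intro h; exact absurd rfl h
  | append_singleton u b ih =>
    intro _ p hp
    have hd : (1 : ℤ) ≤ p.1 := hD p hp
    rw [DFA.eval_append_singleton]
    rcases eq_or_ne u [] with rfl | hu
    · show (((mkDFA ρ r T D ℓ A).eval ([] : List (Letter ρ r))).2 ⟨p, hp⟩).elim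
        (modClamp p.1 (etaInit ρ p.2 b))
        (fun z => modClamp p.1 (etaStep ρ p.2 z.1 b)) = _
      rw [DFA.eval_nil]
      show modClamp p.1 (etaInit ρ p.2 b) = _
      rw [show intVec ρ r ([] ++ [b]) = sgnLetter b from intVec_single ρ r b]
      rfl
    · have h1 := ih hu p hp
      show (((mkDFA ρ r T D ℓ A).eval u).2 ⟨p, hp⟩).elim
        (modClamp p.1 (etaInit ρ p.2 b))
        (fun z => modClamp p.1 (etaStep ρ p.2 z.1 b)) = _
      rw [h1, modClamp_eq hd]
      show modClamp p.1 (etaStep ρ p.2 (tval p.2 (intVec ρ r u) % p.1) b) = _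
      rw [tval_intVec_concat ρ r hu b p.2]
      exact modClamp_congr (emod_etaStep p.2 p.1 _ b)

lemma rel_clampv {ℓ c : ℤ} (hc1 : -ℓ < c) (hc2 : c < ℓ) (R : Rel6) (v : ℤ) :
    R.interp (max (-ℓ) (min ℓ v)) c ↔ R.interp v c := by
  cases R <;> simp only [Rel6.interp, ne_eq, gt_iff_lt, ge_iff_le] <;> omega

lemma dvd_emod_add (d v c : ℤ) : d ∣ v % d + c ↔ d ∣ v + c := by
  have h : v % d = v - d * (v / d) := Int.emod_def v d
  have hd : d ∣ d * (v / d) := dvd_mul_right _ _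
  constructor <;> intro h2
  · have h3 : v + c = v % d + c + d * (v / d) := by rw [h]; ring
    rw [h3]; exact dvd_add h2 hd
  · have h3 : v % d + c = v + c - d * (v / d) := by rw [h]; ring
    rw [h3]; exact dvd_sub h2 hd

lemma evalBC_iff {ρ r : ℕ} (hρ : 2 ≤ ρ) {T : Finset (Fin r → ℤ)}
    {D : Finset (ℤ × (Fin r → ℤ))} {ℓ : ℤ}
    (hℓ : ∀ k ∈ T, posNorm k < ℓ ∧ negNorm k < ℓ) (hD : ∀ p ∈ D, 1 ≤ p.1)
    (A : Set (St r T D ℓ)) {w : List (Letter ρ r)} (hw : w ≠ []) :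
    ∀ ψ : BC r, ψ.valid T D ℓ →
      (evalBC T D ℓ ((mkDFA ρ r T D ℓ A).eval w) ψ ↔ ψ.sat (intVec ρ r w)) := by
  intro ψ
  induction ψ with
  | rel k R c =>
    intro hv
    obtain ⟨hk, hc1, hc2⟩ := hv
    have hℓ1 : (1 : ℤ) ≤ ℓ := lt_of_le_of_lt (posNorm_nonneg k) (hℓ k hk).1
    show (if h : k ∈ T then _ else False) ↔ _
    rw [dif_pos hk, evalT hρ hℓ A w hw k hk, clampSt_eq (by omega : -ℓ ≤ ℓ)]
    show R.interp (max (-ℓ) (min ℓ (tval k (intVec ρ r w)))) c ↔ _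
    exact rel_clampv hc1 hc2 R _
  | dvd d k c =>
    intro hv
    have hmem : (d, k) ∈ D := hv
    have hd : (1 : ℤ) ≤ d := hD (d, k) hmem
    show (if h : (d, k) ∈ D then _ else False) ↔ _
    rw [dif_pos hmem, evalD hD A w hw (d, k) hmem, modClamp_eq hd]
    show d ∣ tval k (intVec ρ r w) % d + c ↔ _
    exact dvd_emod_add d _ c
  | not φ ih =>
    intro hv
    show ¬ _ ↔ ¬ _
    rw [ih hv]
  | and φ χ ih1 ih2 =>
    intro hv
    show _ ∧ _ ↔ _ ∧ _
    rw [ih1 hv.1, ih2 hv.2]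
  | or φ χ ih1 ih2 =>
    intro hv
    show _ ∨ _ ↔ _ ∨ _
    rw [ih1 hv.1, ih2 hv.2]

/-- Theorem `bound_qf_formula`.
For a Boolean combination `ψ` of atoms `t ⋈ c` (`t ∈ T`, `-ℓ < c < ℓ`) and
`d ∣ t + c'` (`d∣t ∈ D`), where `ℓ` exceeds all `‖t‖⁺, ‖t‖⁻` for `t ∈ T` and
`ℓ'` exceeds all moduli `d` in `D`, the minimal DFA representing `⟦ψ⟧` has at
most `(2 + 2ℓ)^{|T|} · ℓ'^{|D|}` states. -/
theorem stmt_10 (ρ r : ℕ) (hρ : 2 ≤ ρ)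
    (T : Finset (Fin r → ℤ)) (hT : T.Nonempty) (hThom : ∀ k ∈ T, Homog k)
    (D : Finset (ℤ × (Fin r → ℤ))) (hDhom : ∀ p ∈ D, 1 ≤ p.1 ∧ Homog p.2)
    (ℓ ℓ' : ℤ)
    (hℓ : ∀ k ∈ T, posNorm k < ℓ ∧ negNorm k < ℓ)
    (hℓ' : ∀ p ∈ D, p.1 < ℓ')
    (ψ : BC r) (hψ : ψ.valid T D ℓ) :
    ∃ (σ : Type) (_ : Fintype σ) (M : DFA (Letter ρ r) σ),
      DFARepresents ρ r M {a | ψ.sat a} ∧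
      (Fintype.card σ : ℤ) ≤ (2 + 2 * ℓ) ^ T.card * ℓ' ^ D.card := by
  classical
  obtain ⟨k0, hk0⟩ := hT
  have hℓ1 : (1 : ℤ) ≤ ℓ := lt_of_le_of_lt (posNorm_nonneg k0) (hℓ k0 hk0).1
  have hD1 : ∀ p ∈ D, 1 ≤ p.1 := fun p hp => (hDhom p hp).1
  set A : Set (St r T D ℓ) := {q | (∀ k, q.1 k ≠ none) ∧ evalBC T D ℓ q ψ} with hA
  refine ⟨St r T D ℓ, inferInstance, mkDFA ρ r T D ℓ A, ?_, ?_⟩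
  · intro w
    rw [DFA.mem_accepts]
    constructor
    · intro hw
      rcases eq_or_ne w [] with rfl | hne
      · exfalso
        rw [DFA.eval_nil] at hw
        exact hw.1 ⟨k0, hk0⟩ rfl
      · exact ⟨hne, (evalBC_iff hρ hℓ hD1 A hne ψ hψ).mp hw.2⟩
    · rintro ⟨hne, hsat⟩
      refine ⟨?_, (evalBC_iff hρ hℓ hD1 A hne ψ hψ).mpr hsat⟩
      intro k
      rw [evalT hρ hℓ A w hne k.1 k.2, clampSt_eq (by omega : -ℓ ≤ ℓ)]
      simp
  · have hcard : Fintype.card (St r T D ℓ) =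
        ((2 * ℓ + 1).toNat + 1) ^ T.card * ∏ p : ↥D, (p.1.1.toNat + 1) := by
      rw [Fintype.card_prod, Fintype.card_fun, Fintype.card_pi]
      congr 1
      · rw [Fintype.card_option, Fintype.card_coe, Int.card_Icc, Fintype.card_coe]
        congr 2
        omega
      · refine Finset.prod_congr rfl fun p _ => ?_
        rw [Fintype.card_option, Fintype.card_coe, Int.card_Ico]
        congr 1
        omega
    rw [hcard]
    push_cast
    rw [Int.toNat_of_nonneg (by omega : (0 : ℤ) ≤ 2 * ℓ + 1)]
    have h2 : (∏ p : ↥D, ((p.1.1.toNat : ℤ) + 1)) ≤ ℓ' ^ D.card := by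
      have hfac : ∀ p : ↥D, ((p.1.1.toNat : ℤ) + 1) ≤ ℓ' := by
        intro p
        have h1 := hD1 p.1 p.2
        have h2 := hℓ' p.1 p.2
        rw [Int.toNat_of_nonneg (by omega)]
        omega
      calc (∏ p : ↥D, ((p.1.1.toNat : ℤ) + 1))
          ≤ ∏ _p : ↥D, ℓ' :=
            Finset.prod_le_prod (fun p _ => by positivity) (fun p _ => hfac p)
        _ = ℓ' ^ D.card := by
            rw [Finset.prod_const, Finset.card_univ, Fintype.card_coe]
    have hbase : ((2 * ℓ + 1 : ℤ) + 1) = 2 + 2 * ℓ := by ring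
    rw [hbase]
    exact mul_le_mul_of_nonneg_left h2 (by positivity)

end Presburger
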